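/- Let H = ℓ²(ℕ; ℂ) and, for each n ∈ ℕ, let Uₙ ∈ L(H) be the block-swap operator Uₙ(x₁, x₂, …) = (x_{n+1}, …, x_{2n}, x₁, …, x_n, x_{2n+1}, …). Set Vₙ = (1 − 1/n) Uₙ, so that ‖Vₙ‖ < 1, and let Aₙ = (I + Vₙ)(I − Vₙ)^{−1} be the Cayley transform. Then each Aₙ is a bounded positive self-adjoint operator, (I + Aₙ)^{−1} = ½ (I − Vₙ), and (I + Aₙ)^{−1} → ½ I in the weak operator topology as n → ∞, but the sequence ((I + Aₙ)^{−1}) does not converge in the strong operator topology. -/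

import Mathlib

open Filter Topology

/-!
STATEMENT 7: With `Uₙ` the block-swap operators on `ℓ²(ℕ; ℂ)` and
`Vₙ = (1 - 1/n) Uₙ`, the Cayley transforms `Aₙ = (I + Vₙ)(I - Vₙ)⁻¹`
(characterized by `Aₙ ∘ (I - Vₙ) = I + Vₙ`) are bounded positive self-adjoint
operators, `(I + Aₙ)⁻¹ = ½ (I - Vₙ)`, and `(I + Aₙ)⁻¹ → ½ I` in the weak
operator topology, but `((I + Aₙ)⁻¹)` has no limit in the strong operator
topology.
-/

local notation "⟪" x ", " y "⟫" => @inner ℂ _ _ x y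

theorem blockSwap_involutive (n : ℕ) :
    Function.Involutive (fun i => if i < n then i + n else if i < 2 * n then i - n else i) := by
  intro i
  simp only
  split_ifs <;> omega

/-- The block-swap permutation of `ℕ`. -/
def blockSwap (n : ℕ) : Equiv.Perm ℕ := (blockSwap_involutive n).toPerm _

theorem blockSwap_apply (n i : ℕ) :
    blockSwap n i = if i < n then i + n else if i < 2 * n then i - n else i := rfl

theorem blockSwap_sq (n i : ℕ) : blockSwap n (blockSwap n i) = i := blockSwap_involutive n i

set_option maxHeartbeats 2000000 in
theorem cayley_block_swap_WOT_not_SOT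
    (U : ℕ → lp (fun _ : ℕ => ℂ) 2 →L[ℂ] lp (fun _ : ℕ => ℂ) 2)
    (hU : ∀ n : ℕ, ∀ x : lp (fun _ : ℕ => ℂ) 2, ∀ i : ℕ,
      (U n x) i = if i < n then x (i + n) else if i < 2 * n then x (i - n) else x i)
    (A : ℕ → lp (fun _ : ℕ => ℂ) 2 →L[ℂ] lp (fun _ : ℕ => ℂ) 2)
    (hA : ∀ n : ℕ, 1 ≤ n →
      (A n).comp (1 - (1 - (n : ℂ)⁻¹) • U n) = 1 + (1 - (n : ℂ)⁻¹) • U n) :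
    (∀ n : ℕ, 1 ≤ n → ‖(1 - (n : ℂ)⁻¹) • U n‖ < 1) ∧
    (∀ n : ℕ, 1 ≤ n → IsSelfAdjoint (A n) ∧
      ∀ x : lp (fun _ : ℕ => ℂ) 2, 0 ≤ (inner ℂ (A n x) x : ℂ).re) ∧
    (∀ n : ℕ, 1 ≤ n →
      (1 + A n).comp ((2 : ℂ)⁻¹ • (1 - (1 - (n : ℂ)⁻¹) • U n)) = 1 ∧
      ((2 : ℂ)⁻¹ • (1 - (1 - (n : ℂ)⁻¹) • U n)).comp (1 + A n) = 1) ∧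
    (∀ f g : lp (fun _ : ℕ => ℂ) 2,
      Tendsto (fun (n : ℕ) => (inner ℂ (((2 : ℂ)⁻¹ • (1 - (1 - (n : ℂ)⁻¹) • U n)) f) g : ℂ))
        atTop (nhds (inner ℂ ((2 : ℂ)⁻¹ • f) g))) ∧
    ¬ ∃ B : lp (fun _ : ℕ => ℂ) 2 →L[ℂ] lp (fun _ : ℕ => ℂ) 2,
      ∀ f : lp (fun _ : ℕ => ℂ) 2,
        Tendsto (fun (n : ℕ) => ((2 : ℂ)⁻¹ • (1 - (1 - (n : ℂ)⁻¹) • U n)) f)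
          atTop (nhds (B f)) := by
  have h2pos : (0 : ℝ) < (2 : ENNReal).toReal := by norm_num
  -- coordinates of `U n`
  have hσ : ∀ n (x : lp (fun _ : ℕ => ℂ) 2) i, (U n x) i = x (blockSwap n i) := by
    intro n x i
    rw [hU n x i, blockSwap_apply]
    split_ifs <;> simp [*]
  -- `U n` is an isometry
  have hiso : ∀ n (x : lp (fun _ : ℕ => ℂ) 2), ‖U n x‖ = ‖x‖ := by
    intro n x
    have h1 : ∑' i, ‖(U n x) i‖ ^ (2 : ENNReal).toReal
        = ∑' i, ‖x (blockSwap n i)‖ ^ (2 : ENNReal).toReal :=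
      tsum_congr fun i => by rw [hσ]
    rw [lp.norm_eq_tsum_rpow h2pos, lp.norm_eq_tsum_rpow h2pos, h1,
      (blockSwap n).tsum_eq (fun j => ‖x j‖ ^ (2 : ENNReal).toReal)]
  have hopnorm : ∀ n, ‖U n‖ ≤ 1 :=
    fun n => (U n).opNorm_le_bound zero_le_one (fun x => by rw [hiso, one_mul])
  -- `U n` is self-adjoint
  have hUsa : ∀ n, IsSelfAdjoint (U n) := by
    intro n
    rw [ContinuousLinearMap.isSelfAdjoint_iff_isSymmetric]
    intro x y
    simp only [ContinuousLinearMap.coe_coe]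
    rw [lp.inner_eq_tsum, lp.inner_eq_tsum]
    have e1 : ∑' i, ⟪(U n x) i, y i⟫ = ∑' i, ⟪x (blockSwap n i), y i⟫ :=
      tsum_congr fun i => by rw [hσ]
    have e2 : ∑' i, ⟪x i, (U n y) i⟫ = ∑' i, ⟪x i, y (blockSwap n i)⟫ :=
      tsum_congr fun i => by rw [hσ]
    have e3 : ∑' i, (fun j => ⟪x (blockSwap n j), y j⟫) (blockSwap n i)
        = ∑' i, ⟪x (blockSwap n i), y i⟫ :=
      (blockSwap n).tsum_eq (fun j => ⟪x (blockSwap n j), y j⟫)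
    have e4 : ∑' i, (fun j => ⟪x (blockSwap n j), y j⟫) (blockSwap n i)
        = ∑' i, ⟪x i, y (blockSwap n i)⟫ :=
      tsum_congr fun i => by simp only [blockSwap_sq]
    rw [e1, e2, ← e3, e4]
  -- norm of the scalar
  have hcnorm : ∀ n : ℕ, ‖1 - ((n : ℕ) : ℂ)⁻¹‖ = 1 - ((n : ℕ) : ℝ)⁻¹ := by
    intro n
    have hle : ((n : ℕ) : ℝ)⁻¹ ≤ 1 := by
      rcases Nat.eq_zero_or_pos n with h | h
      · simp [h]
      · exact inv_le_one_of_one_le₀ (by exact_mod_cast h)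
    rw [show (1 - ((n : ℕ) : ℂ)⁻¹) = (((1 - ((n : ℕ) : ℝ)⁻¹ : ℝ)) : ℂ) by push_cast; ring]
    rw [Complex.norm_real, Real.norm_eq_abs, abs_of_nonneg (by linarith)]
  -- `‖V n‖ < 1`
  have hVnorm : ∀ n : ℕ, 1 ≤ n → ‖(1 - (n : ℂ)⁻¹) • U n‖ < 1 := by
    intro n hn
    have hnpos : (0 : ℝ) < (n : ℝ) := by exact_mod_cast hn
    have h1 : ‖(1 - (n : ℂ)⁻¹) • U n‖ ≤ ‖(1 - (n : ℂ)⁻¹)‖ * ‖U n‖ :=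
      ContinuousLinearMap.opNorm_smul_le _ _
    have h3 : (0 : ℝ) < (n : ℝ)⁻¹ := by positivity
    have h4 := hcnorm n
    have h5 : ‖(1 - (n : ℂ)⁻¹)‖ * ‖U n‖ ≤ ‖(1 - (n : ℂ)⁻¹)‖ * 1 :=
      mul_le_mul_of_nonneg_left (hopnorm n) (norm_nonneg _)
    rw [h4] at h1 h5
    nlinarith
  -- `V n` is self-adjoint
  have hVsa : ∀ n : ℕ, IsSelfAdjoint ((1 - (n : ℂ)⁻¹) • U n) := by
    intro n
    have hc : star (1 - (n : ℂ)⁻¹) = 1 - (n : ℂ)⁻¹ := by simp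
    exact IsSelfAdjoint.smul hc (hUsa n)
  classical
  -- truncation
  set P : ℕ → lp (fun _ : ℕ => ℂ) 2 → lp (fun _ : ℕ => ℂ) 2 :=
    fun n x => ∑ i ∈ Finset.range n, lp.single 2 i (x i) with hPdef
  have hP_apply : ∀ n (x : lp (fun _ : ℕ => ℂ) 2) j,
      (P n x) j = if j < n then x j else 0 := by
    intro n x j
    simp only [hPdef]
    rw [lp.coeFn_sum, Finset.sum_apply]
    simp [lp.single_apply, Pi.single_apply, Finset.mem_range]
  have hPlim : ∀ x : lp (fun _ : ℕ => ℂ) 2,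
      Tendsto (fun n => P n x) atTop (nhds x) :=
    fun x => (lp.hasSum_single ENNReal.ofNat_ne_top x).tendsto_sum_nat
  have hPnorm : ∀ x : lp (fun _ : ℕ => ℂ) 2,
      Tendsto (fun n => ‖x - P n x‖) atTop (nhds 0) := by
    intro x
    have h := (tendsto_const_nhds (x := x) (f := atTop)).sub (hPlim x)
    have h2 := h.norm
    simpa using h2
  -- orthogonality
  have horth : ∀ n (f g : lp (fun _ : ℕ => ℂ) 2), ⟪U n (P n f), P n g⟫ = 0 := by
    intro n f g
    rw [lp.inner_eq_tsum]
    have hzero : ∀ i : ℕ, ⟪(U n (P n f)) i, (P n g) i⟫ = 0 := by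
      intro i
      by_cases hi : i < n
      · have h1 : (U n (P n f)) i = (P n f) (i + n) := by rw [hU n _ i, if_pos hi]
        have h2 : (P n f) (i + n) = 0 := by rw [hP_apply]; simp
        rw [h1, h2, inner_zero_left]
      · have h2 : (P n g) i = 0 := by rw [hP_apply, if_neg hi]
        rw [h2, inner_zero_right]
    rw [tsum_congr hzero, tsum_zero]
  -- weak convergence of U n
  have hUweak : ∀ f g : lp (fun _ : ℕ => ℂ) 2,
      Tendsto (fun n => (⟪U n f, g⟫ : ℂ)) atTop (nhds 0) := by
    intro f g
    rw [tendsto_zero_iff_norm_tendsto_zero]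
    have hbound : ∀ n, ‖(⟪U n f, g⟫ : ℂ)‖ ≤ ‖P n f‖ * ‖g - P n g‖ + ‖f - P n f‖ * ‖g‖ := by
      intro n
      have hsplit : (⟪U n f, g⟫ : ℂ)
          = ⟪U n (P n f), g - P n g⟫ + ⟪U n (f - P n f), g⟫ := by
        have hf : f = P n f + (f - P n f) := by abel
        calc (⟪U n f, g⟫ : ℂ) = ⟪U n (P n f + (f - P n f)), g⟫ := by rw [← hf]
          _ = ⟪U n (P n f), g⟫ + ⟪U n (f - P n f), g⟫ := by rw [map_add, inner_add_left]
          _ = (⟪U n (P n f), P n g⟫ + ⟪U n (P n f), g - P n g⟫) + ⟪U n (f - P n f), g⟫ := by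
              rw [← inner_add_right, show P n g + (g - P n g) = g from by abel]
          _ = ⟪U n (P n f), g - P n g⟫ + ⟪U n (f - P n f), g⟫ := by rw [horth, zero_add]
      rw [hsplit]
      calc ‖(⟪U n (P n f), g - P n g⟫ : ℂ) + ⟪U n (f - P n f), g⟫‖
          ≤ ‖(⟪U n (P n f), g - P n g⟫ : ℂ)‖ + ‖(⟪U n (f - P n f), g⟫ : ℂ)‖ := norm_add_le _ _
        _ ≤ ‖U n (P n f)‖ * ‖g - P n g‖ + ‖U n (f - P n f)‖ * ‖g‖ :=
            add_le_add (norm_inner_le_norm _ _) (norm_inner_le_norm _ _)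
        _ = ‖P n f‖ * ‖g - P n g‖ + ‖f - P n f‖ * ‖g‖ := by rw [hiso, hiso]
    have hlim : Tendsto (fun n => ‖P n f‖ * ‖g - P n g‖ + ‖f - P n f‖ * ‖g‖) atTop (nhds 0) := by
      have l1 : Tendsto (fun n => ‖P n f‖) atTop (nhds ‖f‖) := (hPlim f).norm
      have := (l1.mul (hPnorm g)).add ((hPnorm f).mul (tendsto_const_nhds (x := ‖g‖)))
      simpa using this
    exact squeeze_zero (fun n => norm_nonneg _) hbound hlim
  -- inverse of n tends to zero (in ℂ)
  have hninvR : Tendsto (fun n : ℕ => ((n : ℕ) : ℝ)⁻¹) atTop (nhds 0) :=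
    tendsto_inv_atTop_zero.comp tendsto_natCast_atTop_atTop
  have hninv : Tendsto (fun n : ℕ => ((n : ℕ) : ℂ)⁻¹) atTop (nhds 0) := by
    have := (Complex.continuous_ofReal.tendsto 0).comp hninvR
    simpa [Function.comp_def] using this
  have hconj : Tendsto (fun n : ℕ => (starRingEnd ℂ) (1 - ((n : ℕ) : ℂ)⁻¹)) atTop (nhds 1) := by
    have := ((Complex.continuous_conj.tendsto (1 - 0)).comp
      ((tendsto_const_nhds (x := (1:ℂ))).sub hninv))
    simpa [Function.comp_def] using this
  -- the WOT statement
  have hWOT : ∀ f g : lp (fun _ : ℕ => ℂ) 2,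
      Tendsto (fun (n : ℕ) => (inner ℂ (((2 : ℂ)⁻¹ • (1 - (1 - (n : ℂ)⁻¹) • U n)) f) g : ℂ))
        atTop (nhds (inner ℂ ((2 : ℂ)⁻¹ • f) g)) := by
    intro f g
    have hexpr : ∀ n : ℕ, (inner ℂ (((2 : ℂ)⁻¹ • (1 - (1 - (n : ℂ)⁻¹) • U n)) f) g : ℂ)
        = (2 : ℂ)⁻¹ * ⟪f, g⟫
          - (2 : ℂ)⁻¹ * ((starRingEnd ℂ) (1 - ((n : ℕ) : ℂ)⁻¹)) * ⟪U n f, g⟫ := by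
      intro n
      simp only [ContinuousLinearMap.smul_apply, ContinuousLinearMap.sub_apply,
        ContinuousLinearMap.one_apply, inner_smul_left, inner_sub_left, map_inv₀,
        Complex.conj_ofNat]
      ring
    have htarget : (inner ℂ ((2 : ℂ)⁻¹ • f) g : ℂ) = (2 : ℂ)⁻¹ * ⟪f, g⟫ := by
      rw [inner_smul_left, map_inv₀, Complex.conj_ofNat]
    rw [htarget]
    have h := (tendsto_const_nhds (x := (2 : ℂ)⁻¹ * ⟪f, g⟫) (f := atTop)).sub
      (((tendsto_const_nhds (x := (2:ℂ)⁻¹) (f := atTop)).mul hconj).mul (hUweak f g))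
    have h2 : Tendsto (fun n : ℕ => (2 : ℂ)⁻¹ * ⟪f, g⟫
        - (2 : ℂ)⁻¹ * ((starRingEnd ℂ) (1 - ((n : ℕ) : ℂ)⁻¹)) * ⟪U n f, g⟫)
        atTop (nhds ((2 : ℂ)⁻¹ * ⟪f, g⟫)) := by simpa using h
    exact h2.congr (fun n => (hexpr n).symm)
  refine ⟨hVnorm, ?_, ?_, hWOT, ?_⟩
  · intro n hn
    have hw := hVnorm n hn
    set V := (1 - (n : ℂ)⁻¹) • U n with hVdef
    set w : (lp (fun _ : ℕ => ℂ) 2 →L[ℂ] lp (fun _ : ℕ => ℂ) 2)ˣ := Units.oneSub V hw with hwdef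
    have hAmul : A n * (1 - V) = 1 + V := by
      rw [ContinuousLinearMap.mul_def]; exact hA n hn
    have hcomm : (1 + V) * (1 - V) = (1 - V) * (1 + V) := by noncomm_ring
    have hAeq : A n = (1 + V) * ↑w⁻¹ := by
      rw [Units.eq_mul_inv_iff_mul_eq]; exact hAmul
    have hc1 : Commute (1 + V) (↑w : _) := hcomm
    have hc2 : Commute (1 + V) (↑w⁻¹ : _) := hc1.units_inv_right
    have hAcomm : Commute (A n) (↑w : _) := by
      rw [hAeq]
      have hcww : Commute ((↑w : lp (fun _ : ℕ => ℂ) 2 →L[ℂ] lp (fun _ : ℕ => ℂ) 2))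
          ((↑w : lp (fun _ : ℕ => ℂ) 2 →L[ℂ] lp (fun _ : ℕ => ℂ) 2)) := Commute.refl _
      exact hc1.mul_left hcww.units_inv_left
    have hAc' : A n * (1 - V) = (1 - V) * A n := hAcomm.eq
    have hVstar : star V = V := (hVsa n).star_eq
    have hsub : star ((1 : lp (fun _ : ℕ => ℂ) 2 →L[ℂ] lp (fun _ : ℕ => ℂ) 2) - V) = 1 - V := by
      rw [star_sub, star_one, hVstar]
    constructor
    · -- self-adjoint
      have h1 : star (A n) * (1 - V) = 1 + V := by
        calc star (A n) * (1 - V) = star (A n) * star (1 - V) := by rw [hsub]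
          _ = star ((1 - V) * A n) := (star_mul _ _).symm
          _ = star (A n * (1 - V)) := by rw [hAc']
          _ = star (1 + V) := by rw [hAmul]
          _ = 1 + V := by rw [star_add, star_one, hVstar]
      have h2 : star (A n) * (↑w : _) = A n * (↑w : _) := h1.trans hAmul.symm
      exact w.isUnit.mul_right_cancel h2
    · -- positivity
      intro x
      set y := (↑w⁻¹ : lp (fun _ : ℕ => ℂ) 2 →L[ℂ] lp (fun _ : ℕ => ℂ) 2) x with hy
      have hxy : ((1 - V) : lp (fun _ : ℕ => ℂ) 2 →L[ℂ] lp (fun _ : ℕ => ℂ) 2) y = x := by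
        show (↑w : lp (fun _ : ℕ => ℂ) 2 →L[ℂ] lp (fun _ : ℕ => ℂ) 2)
          ((↑w⁻¹ : lp (fun _ : ℕ => ℂ) 2 →L[ℂ] lp (fun _ : ℕ => ℂ) 2) x) = x
        rw [← ContinuousLinearMap.mul_apply, w.mul_inv]
        rfl
      have hAx : A n x = ((1 + V) : lp (fun _ : ℕ => ℂ) 2 →L[ℂ] lp (fun _ : ℕ => ℂ) 2) y := by
        conv_lhs => rw [← hxy]
        rw [← ContinuousLinearMap.comp_apply, hA n hn]
      have hinner : (inner ℂ (A n x) x : ℂ)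
          = ⟪y, y⟫ + ⟪V y, y⟫ - ⟪y, V y⟫ - ⟪V y, V y⟫ := by
        rw [hAx, ← hxy]
        simp only [ContinuousLinearMap.add_apply, ContinuousLinearMap.sub_apply,
          ContinuousLinearMap.one_apply, inner_add_left, inner_sub_right, inner_sub_left]
        ring
      have hsym := inner_re_symm (𝕜 := ℂ) (V y) y
      have hy2 := inner_self_eq_norm_sq (𝕜 := ℂ) (E := lp (fun _ : ℕ => ℂ) 2) y
      have hv2 := inner_self_eq_norm_sq (𝕜 := ℂ) (E := lp (fun _ : ℕ => ℂ) 2) (V y)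
      simp only [RCLike.re_to_complex] at hsym hy2 hv2
      have hre : (inner ℂ (A n x) x : ℂ).re = ‖y‖ ^ 2 - ‖V y‖ ^ 2 := by
        rw [hinner]
        simp only [Complex.sub_re, Complex.add_re]
        linarith
      rw [hre]
      have hVy : ‖V y‖ ≤ ‖y‖ := by
        have := V.le_opNorm y
        nlinarith [norm_nonneg y, norm_nonneg (V y)]
      nlinarith [norm_nonneg y, norm_nonneg (V y)]
  · intro n hn
    have hw := hVnorm n hn
    set V := (1 - (n : ℂ)⁻¹) • U n with hVdef
    set w : (lp (fun _ : ℕ => ℂ) 2 →L[ℂ] lp (fun _ : ℕ => ℂ) 2)ˣ := Units.oneSub V hw with hwdef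
    have hAmul : A n * (1 - V) = 1 + V := by
      rw [ContinuousLinearMap.mul_def]; exact hA n hn
    have hcomm : (1 + V) * (1 - V) = (1 - V) * (1 + V) := by noncomm_ring
    have hAeq : A n = (1 + V) * ↑w⁻¹ := by
      rw [Units.eq_mul_inv_iff_mul_eq]; exact hAmul
    have hc1 : Commute (1 + V) (↑w : _) := hcomm
    have hAcomm : Commute (A n) (↑w : _) := by
      rw [hAeq]
      have hcww : Commute ((↑w : lp (fun _ : ℕ => ℂ) 2 →L[ℂ] lp (fun _ : ℕ => ℂ) 2))
          ((↑w : lp (fun _ : ℕ => ℂ) 2 →L[ℂ] lp (fun _ : ℕ => ℂ) 2)) := Commute.refl _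
      exact hc1.mul_left hcww.units_inv_left
    have hAc' : (1 - V) * A n = A n * (1 - V) := hAcomm.eq.symm
    have hsum : ((1 : lp (fun _ : ℕ => ℂ) 2 →L[ℂ] lp (fun _ : ℕ => ℂ) 2) - V) + (1 + V)
        = (2 : ℂ) • (1 : lp (fun _ : ℕ => ℂ) 2 →L[ℂ] lp (fun _ : ℕ => ℂ) 2) := by
      rw [two_smul]; abel
    constructor
    · rw [← ContinuousLinearMap.mul_def]
      calc (1 + A n) * ((2 : ℂ)⁻¹ • (1 - V))
          = (2 : ℂ)⁻¹ • ((1 + A n) * (1 - V)) := by rw [mul_smul_comm]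
        _ = (2 : ℂ)⁻¹ • ((1 - V) + (1 + V)) := by rw [add_mul, one_mul, hAmul]
        _ = (2 : ℂ)⁻¹ • ((2 : ℂ) • (1 : lp (fun _ : ℕ => ℂ) 2 →L[ℂ] lp (fun _ : ℕ => ℂ) 2)) := by
            rw [hsum]
        _ = 1 := by rw [smul_smul]; norm_num
    · rw [← ContinuousLinearMap.mul_def]
      calc ((2 : ℂ)⁻¹ • (1 - V)) * (1 + A n)
          = (2 : ℂ)⁻¹ • ((1 - V) * (1 + A n)) := by rw [smul_mul_assoc]
        _ = (2 : ℂ)⁻¹ • ((1 - V) + (1 + V)) := by rw [mul_add, mul_one, hAc', hAmul]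
        _ = (2 : ℂ)⁻¹ • ((2 : ℂ) • (1 : lp (fun _ : ℕ => ℂ) 2 →L[ℂ] lp (fun _ : ℕ => ℂ) 2)) := by
            rw [hsum]
        _ = 1 := by rw [smul_smul]; norm_num
  · rintro ⟨B, hB⟩
    set f₀ : lp (fun _ : ℕ => ℂ) 2 := lp.single 2 0 1 with hf₀def
    have hf₀ : ‖f₀‖ = 1 := by
      have h := lp.norm_single (E := fun _ : ℕ => ℂ) (p := 2) (by norm_num) 0 (1 : ℂ)
      exact h.trans norm_one
    have hBf : B f₀ = (2 : ℂ)⁻¹ • f₀ := by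
      apply ext_inner_right ℂ
      intro g
      have h1 : Tendsto (fun n : ℕ => (⟪((2 : ℂ)⁻¹ • (1 - (1 - (n : ℂ)⁻¹) • U n)) f₀, g⟫ : ℂ))
          atTop (nhds ⟪B f₀, g⟫) := (hB f₀).inner tendsto_const_nhds
      exact tendsto_nhds_unique h1 (hWOT f₀ g)
    have h3 : Tendsto (fun n : ℕ => f₀ - (2 : ℂ) • ((2 : ℂ)⁻¹ • (1 - (1 - (n : ℂ)⁻¹) • U n)) f₀)
        atTop (nhds 0) := by
      have := (tendsto_const_nhds (x := f₀) (f := atTop)).sub ((hB f₀).const_smul (2 : ℂ))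
      rw [hBf] at this
      have heq : f₀ - (2 : ℂ) • ((2 : ℂ)⁻¹ • f₀) = 0 := by
        rw [smul_smul]; norm_num
      rwa [heq] at this
    have h4 : ∀ n : ℕ, f₀ - (2 : ℂ) • ((2 : ℂ)⁻¹ • (1 - (1 - (n : ℂ)⁻¹) • U n)) f₀
        = (1 - (n : ℂ)⁻¹) • U n f₀ := by
      intro n
      simp only [ContinuousLinearMap.smul_apply, ContinuousLinearMap.sub_apply,
        ContinuousLinearMap.one_apply, smul_smul]
      norm_num
    have h5 : Tendsto (fun n : ℕ => ‖(1 - (n : ℂ)⁻¹) • U n f₀‖) atTop (nhds 0) := by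
      have := (h3.congr h4).norm
      simpa using this
    have h6 : ∀ n : ℕ, ‖(1 - (n : ℂ)⁻¹) • U n f₀‖ = 1 - ((n : ℕ) : ℝ)⁻¹ := by
      intro n
      rw [norm_smul, hiso, hf₀, mul_one, hcnorm n]
    have h7 : Tendsto (fun n : ℕ => 1 - ((n : ℕ) : ℝ)⁻¹) atTop (nhds 1) := by
      have := (tendsto_const_nhds (x := (1:ℝ)) (f := atTop)).sub hninvR
      simpa using this
    have h8 : Tendsto (fun n : ℕ => 1 - ((n : ℕ) : ℝ)⁻¹) atTop (nhds 0) :=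
      h5.congr (fun n => h6 n)
    have : (0 : ℝ) = 1 := tendsto_nhds_unique h8 h7
    norm_num at this
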